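/- For every real number a, e^a - a - 1 ≤ 3 · Σ_{r=1}^∞ |a|^{2r}/(2r)!. -/
import Mathlib

/-- For every real `a`, `e^a - a - 1 ≤ 3 * ∑_{r=1}^∞ |a|^(2r)/(2r)!`. -/
theorem exp_sub_le_three_tsum_even (a : ℝ) :
    Real.exp a - a - 1 ≤ 3 * ∑' r : ℕ, |a| ^ (2 * (r + 1)) / (Nat.factorial (2 * (r + 1))) := by
  have hsum : HasSum (fun r : ℕ => |a| ^ (2 * (r + 1)) / (Nat.factorial (2 * (r + 1)) : ℝ))
      (Real.cosh |a| - 1) := by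
    have h := Real.hasSum_cosh |a|
    have h1 := (hasSum_nat_add_iff'
      (f := fun n : ℕ => |a| ^ (2 * n) / (Nat.factorial (2 * n) : ℝ)) 1).2 h
    simpa using h1
  rw [hsum.tsum_eq]
  have hx : (0:ℝ) ≤ |a| := abs_nonneg a
  have h1 : 1 + |a| ≤ Real.exp |a| := by linarith [Real.add_one_le_exp |a|]
  have h2 : 1 - |a| ≤ Real.exp (-|a|) := by linarith [Real.add_one_le_exp (-|a|)]
  have h3 : Real.exp (-|a|) * Real.exp |a| = 1 := by rw [← Real.exp_add]; simp
  have hc : Real.cosh |a| = (Real.exp |a| + Real.exp (-|a|)) / 2 := Real.cosh_eq |a|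
  have hp : 0 < Real.exp |a| := Real.exp_pos _
  have hp2 : 0 < Real.exp (-|a|) := Real.exp_pos _
  rcases abs_cases a with ⟨h, ha⟩ | ⟨h, ha⟩
  · have he : Real.exp a = Real.exp |a| := by rw [h]
    rw [he, hc]
    nlinarith [sq_nonneg (Real.exp |a| - 1)]
  · have he : Real.exp a = Real.exp (-|a|) := by rw [h]; ring_nf
    rw [he, hc]
    nlinarith [sq_nonneg (Real.exp |a| - 1)]
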